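/- Let k ≥ 3, m ≥ 0 and n ≥ k−1 be integers. Then #{Δ ∈ P_k(m,n) : d_1 = d_{k−1} ≥ 2 and α_1 = α_2 = β_1 = d_1} = #{Δ ∈ P_k(m,n+1) : d_1 ≥ 3, d_i = d_1 − 1 for all 2 ≤ i ≤ k−1, γ^1 = ⋯ = γ^{k−2} = ∅, and α_1 = d_1 − 1}. -/

import Mathlib

/-- A partition: a finite nonincreasing list of positive integers. -/
structure Partn where
  parts : List ℕ
  sorted : parts.Pairwise (· ≥ ·)
  pos : ∀ x ∈ parts, 0 < x

namespace Partn

/-- The weight `|λ|` of a partition: the sum of its parts. -/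
def wt (p : Partn) : ℕ := p.parts.sum

/-- The length `ℓ(λ)`: the number of parts. -/
def len (p : Partn) : ℕ := p.parts.length

/-- The `j`-th largest part `λ_j` (1-indexed), with `λ_j = 0` for `j > ℓ(λ)`. -/
def part (p : Partn) (j : ℕ) : ℕ := p.parts.getD (j - 1) 0

/-- `f_j(λ)`: the number of parts of `λ` equal to `j`. -/
def freq (p : Partn) (j : ℕ) : ℕ := p.parts.count j

/-- The empty partition. -/
def empty : Partn := ⟨[], List.Pairwise.nil, by simp⟩

end Partn

/-- The type of `(2k-1)`-tuples `(α, β, γ^1, …, γ^{k-2}, ϖ^1, …, ϖ^{k-1})`. -/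
abbrev PTuple (k : ℕ) : Type :=
  Partn × Partn × (Fin (k - 2) → Partn) × (Fin (k - 1) → Partn)

/-- `d_j := ℓ(ϖ^j)` (1-indexed, `0` out of range). -/
def dIdx (k : ℕ) (w : Fin (k - 1) → Partn) (j : ℕ) : ℕ :=
  if h : j - 1 < k - 1 then (w ⟨j - 1, h⟩).len else 0

/-- `γ^j` (1-indexed, the empty partition out of range). -/
def gIdx (k : ℕ) (g : Fin (k - 2) → Partn) (j : ℕ) : Partn :=
  if h : j - 1 < k - 2 then g ⟨j - 1, h⟩ else Partn.empty

/-- Membership in Garvan-type set `P_k(m, n)` of `(2k-1)`-tuples of partitions. -/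
def PkMem (k : ℕ) (m : ℤ) (n : ℕ) (t : PTuple k) : Prop :=
  (∀ i : Fin (k - 1), (t.2.2.2 i).parts =
      List.replicate (t.2.2.2 i).len (t.2.2.2 i).len) ∧
  (∀ j, 1 ≤ j → j + 1 ≤ k - 1 → dIdx k t.2.2.2 (j + 1) ≤ dIdx k t.2.2.2 j) ∧
  1 ≤ dIdx k t.2.2.2 (k - 1) ∧
  (∀ x ∈ t.1.parts, x ≤ dIdx k t.2.2.2 (k - 1)) ∧
  (∀ x ∈ t.2.1.parts, x ≤ dIdx k t.2.2.2 (k - 1)) ∧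
  (t.1.len : ℤ) - (t.2.1.len : ℤ) = m ∧
  (∀ j, 1 ≤ j → j ≤ k - 2 →
      (gIdx k t.2.2.1 j).len ≤ dIdx k t.2.2.2 j - dIdx k t.2.2.2 (j + 1)) ∧
  t.1.wt + t.2.1.wt + (∑ i, (t.2.2.1 i).wt) + (∑ i, (t.2.2.2 i).wt) = n

/- ### Auxiliary material for the proof -/

namespace Partn

theorem ext' {p q : Partn} (h : p.parts = q.parts) : p = q := by
  cases p; cases q; simpa using h

/-- Remove the largest part. -/
def tail (p : Partn) : Partn :=
  ⟨p.parts.tail, p.sorted.tail, fun x hx => p.pos x (List.mem_of_mem_tail hx)⟩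

@[simp] lemma tail_parts (p : Partn) : p.tail.parts = p.parts.tail := rfl
@[simp] lemma empty_wt : Partn.empty.wt = 0 := rfl
@[simp] lemma empty_len : Partn.empty.len = 0 := rfl

end Partn

/-- The square partition `d^d`. -/
def sqp (d : ℕ) : Partn :=
  ⟨List.replicate d d, List.pairwise_replicate.mpr (Or.inr (le_refl d)),
   fun x hx => by
     rcases List.mem_replicate.mp hx with ⟨h1, h2⟩; omega⟩

@[simp] lemma sqp_parts (d : ℕ) : (sqp d).parts = List.replicate d d := rfl
@[simp] lemma sqp_len (d : ℕ) : (sqp d).len = d := by simp [Partn.len, sqp]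
@[simp] lemma sqp_wt (d : ℕ) : (sqp d).wt = d * d := by
  simp [Partn.wt, sqp, List.sum_replicate, smul_eq_mul]

lemma dIdx_fin (k : ℕ) (w : Fin (k - 1) → Partn) (i : Fin (k - 1)) :
    dIdx k w ((i : ℕ) + 1) = (w i).len := by
  have h : (i : ℕ) + 1 - 1 < k - 1 := by simpa using i.isLt
  rw [dIdx, dif_pos h]
  congr 1

lemma gIdx_fin (k : ℕ) (g : Fin (k - 2) → Partn) (i : Fin (k - 2)) :
    gIdx k g ((i : ℕ) + 1) = g i := by
  have h : (i : ℕ) + 1 - 1 < k - 2 := by simpa using i.isLt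
  rw [gIdx, dif_pos h]
  congr 1

lemma dIdx_ifsq (k a b : ℕ) (j : ℕ) (h1 : 1 ≤ j) (h2 : j ≤ k - 1) :
    dIdx k (fun i : Fin (k - 1) => if (i : ℕ) = 0 then sqp a else sqp b) j
      = if j = 1 then a else b := by
  have h : j - 1 < k - 1 := by omega
  rw [dIdx, dif_pos h]
  by_cases hj : j = 1
  · simp [hj]
  · have hne : j - 1 ≠ 0 := by omega
    simp [hj, hne]

lemma dIdx_const (k d : ℕ) (j : ℕ) (h1 : 1 ≤ j) (h2 : j ≤ k - 1) :
    dIdx k (fun _ : Fin (k - 1) => sqp d) j = d := by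
  have h : j - 1 < k - 1 := by omega
  rw [dIdx, dif_pos h]; simp

lemma dIdx_anti (k : ℕ) (w : Fin (k - 1) → Partn)
    (h2 : ∀ j, 1 ≤ j → j + 1 ≤ k - 1 → dIdx k w (j + 1) ≤ dIdx k w j) :
    ∀ i j, 1 ≤ i → i ≤ j → j ≤ k - 1 → dIdx k w j ≤ dIdx k w i := by
  intro i j hi hij hjk
  induction j with
  | zero => omega
  | succ j ih =>
    rcases Nat.eq_or_lt_of_le hij with heq | hlt
    · exact heq ▸ le_refl _
    · have hij' : i ≤ j := by omega
      calc dIdx k w (j + 1) ≤ dIdx k w j := h2 j (by omega) hjk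
        _ ≤ dIdx k w i := ih hij' (by omega)

lemma head_struct (p : Partn) (c : ℕ) (hc : 0 < c) (h : p.part 1 = c) :
    p.parts = c :: p.tail.parts := by
  rcases hp : p.parts with _ | ⟨a, l⟩
  · exfalso
    rw [Partn.part, hp] at h
    simp at h
    omega
  · have ha : a = c := by rw [Partn.part, hp] at h; simpa using h
    rw [Partn.tail_parts, hp, ha]
    rfl

lemma sum_ifsq (k : ℕ) (hk : 3 ≤ k) (a b : ℕ) :
    (∑ i : Fin (k - 1), (if (i : ℕ) = 0 then sqp a else sqp b).wt)
      = a * a + (k - 2) * (b * b) := by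
  have h0 : 0 < k - 1 := by omega
  have hfe : (fun i : Fin (k - 1) => (if (i : ℕ) = 0 then sqp a else sqp b).wt)
      = Function.update (fun _ : Fin (k - 1) => (sqp b).wt) ⟨0, h0⟩ ((sqp a).wt) := by
    funext i
    by_cases h : (i : ℕ) = 0
    · have hi : i = ⟨0, h0⟩ := Fin.ext h
      rw [hi, Function.update_self]
      simp
    · have hne : i ≠ ⟨0, h0⟩ := by simp [Fin.ext_iff, h]
      rw [Function.update_of_ne hne]
      simp [h]
  rw [hfe, Finset.sum_update_of_mem (Finset.mem_univ _)]
  have hcard : ((Finset.univ : Finset (Fin (k - 1))) \ {⟨0, h0⟩}).card = k - 2 := by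
    rw [Finset.sdiff_singleton_eq_erase, Finset.card_erase_of_mem (Finset.mem_univ _)]
    simp
    omega
  rw [Finset.sum_const, hcard]
  simp [smul_eq_mul]

/-- The forward map of the bijection. -/
def Fmap (k : ℕ) (t : PTuple k) : PTuple k :=
  (t.1.tail, t.2.1.tail, t.2.2.1,
   fun i : Fin (k - 1) =>
     if (i : ℕ) = 0 then sqp (dIdx k t.2.2.2 1 + 1) else sqp (dIdx k t.2.2.2 1))

/-- Lemma 5.13 (restated). -/
theorem lem_pp11 (k : ℕ) (m : ℤ) (n : ℕ) (hk : 3 ≤ k) (hm : 0 ≤ m)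
    (hn : k - 1 ≤ n) :
    {t : PTuple k | PkMem k m n t ∧
        dIdx k t.2.2.2 1 = dIdx k t.2.2.2 (k - 1) ∧ 2 ≤ dIdx k t.2.2.2 1 ∧
        t.1.part 1 = dIdx k t.2.2.2 1 ∧ t.1.part 2 = dIdx k t.2.2.2 1 ∧
        t.2.1.part 1 = dIdx k t.2.2.2 1}.ncard =
      {t : PTuple k | PkMem k m (n + 1) t ∧ 3 ≤ dIdx k t.2.2.2 1 ∧
        (∀ j, 2 ≤ j → j ≤ k - 1 → dIdx k t.2.2.2 j = dIdx k t.2.2.2 1 - 1) ∧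
        (∀ j, 1 ≤ j → j ≤ k - 2 → (gIdx k t.2.2.1 j).parts = []) ∧
        t.1.part 1 = dIdx k t.2.2.2 1 - 1}.ncard := by
  have h0 : 0 < k - 1 := by omega
  set S : Set (PTuple k) := {t : PTuple k | PkMem k m n t ∧
        dIdx k t.2.2.2 1 = dIdx k t.2.2.2 (k - 1) ∧ 2 ≤ dIdx k t.2.2.2 1 ∧
        t.1.part 1 = dIdx k t.2.2.2 1 ∧ t.1.part 2 = dIdx k t.2.2.2 1 ∧
        t.2.1.part 1 = dIdx k t.2.2.2 1} with hS
  set T : Set (PTuple k) := {t : PTuple k | PkMem k m (n + 1) t ∧ 3 ≤ dIdx k t.2.2.2 1 ∧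
        (∀ j, 2 ≤ j → j ≤ k - 1 → dIdx k t.2.2.2 j = dIdx k t.2.2.2 1 - 1) ∧
        (∀ j, 1 ≤ j → j ≤ k - 2 → (gIdx k t.2.2.1 j).parts = []) ∧
        t.1.part 1 = dIdx k t.2.2.2 1 - 1} with hT
  -- structural facts about elements of S
  have leftS : ∀ t ∈ S,
      t.2.2.2 = (fun _ => sqp (dIdx k t.2.2.2 1)) ∧
      (∀ i, t.2.2.1 i = Partn.empty) ∧
      t.1.parts = dIdx k t.2.2.2 1 :: t.1.tail.parts ∧
      t.2.1.parts = dIdx k t.2.2.2 1 :: t.2.1.tail.parts := by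
    intro t ht
    obtain ⟨⟨hsq, hchain, hd1, hαb, hβb, hml, hγ, hwt⟩, hd1k, hd2, hα1, hα2, hβ1⟩ := ht
    set d := dIdx k t.2.2.2 1 with hd
    have hwall : ∀ j, 1 ≤ j → j ≤ k - 1 → dIdx k t.2.2.2 j = d := by
      intro j h1 h2
      have hub := dIdx_anti k t.2.2.2 hchain 1 j le_rfl h1 h2
      have hlb := dIdx_anti k t.2.2.2 hchain j (k - 1) h1 h2 le_rfl
      omega
    have hw : t.2.2.2 = (fun _ => sqp d) := by
      funext i
      apply Partn.ext'
      have hlen : (t.2.2.2 i).len = d := by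
        rw [← dIdx_fin k t.2.2.2 i]
        exact hwall _ (by omega) (by omega)
      rw [hsq i, hlen, sqp_parts]
    refine ⟨hw, ?_, ?_, ?_⟩
    · intro i
      apply Partn.ext'
      have h1 : (gIdx k t.2.2.1 ((i : ℕ) + 1)).len ≤
          dIdx k t.2.2.2 ((i : ℕ) + 1) - dIdx k t.2.2.2 ((i : ℕ) + 2) :=
        hγ _ (by omega) (by omega)
      rw [gIdx_fin] at h1
      rw [hwall ((i : ℕ) + 1) (by omega) (by omega),
          hwall ((i : ℕ) + 2) (by omega) (by have := i.isLt; omega)] at h1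
      have : (t.2.2.1 i).len = 0 := by omega
      rw [Partn.len] at this
      simpa [Partn.empty] using List.length_eq_zero_iff.mp this
    · exact head_struct t.1 d (by omega) hα1
    · exact head_struct t.2.1 d (by omega) hβ1
  -- structural facts about elements of T
  have rightT : ∀ t ∈ T,
      t.2.2.2 = (fun i : Fin (k - 1) =>
        if (i : ℕ) = 0 then sqp (dIdx k t.2.2.2 1) else sqp (dIdx k t.2.2.2 1 - 1)) ∧
      (∀ i, t.2.2.1 i = Partn.empty) ∧
      (∀ x ∈ t.1.parts, x ≤ dIdx k t.2.2.2 1 - 1) ∧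
      (∀ x ∈ t.2.1.parts, x ≤ dIdx k t.2.2.2 1 - 1) := by
    intro t ht
    obtain ⟨⟨hsq, hchain, hd1, hαb, hβb, hml, hγ, hwt⟩, hd3, hdall, hgnil, hα1⟩ := ht
    set d := dIdx k t.2.2.2 1 with hd
    have hdk : dIdx k t.2.2.2 (k - 1) = d - 1 := hdall (k - 1) (by omega) le_rfl
    refine ⟨?_, ?_, ?_, ?_⟩
    · funext i
      apply Partn.ext'
      by_cases h : (i : ℕ) = 0
      · have hlen : (t.2.2.2 i).len = d := by
          rw [← dIdx_fin k t.2.2.2 i, h]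
        rw [hsq i, hlen]
        simp [h]
      · have hlen : (t.2.2.2 i).len = d - 1 := by
          rw [← dIdx_fin k t.2.2.2 i]
          exact hdall _ (by omega) (by have := i.isLt; omega)
        rw [hsq i, hlen]
        simp [h]
    · intro i
      apply Partn.ext'
      have := hgnil ((i : ℕ) + 1) (by omega) (by have := i.isLt; omega)
      rw [gIdx_fin] at this
      simpa [Partn.empty] using this
    · intro x hx
      have := hαb x hx
      omega
    · intro x hx
      have := hβb x hx
      omega
  have hbij : Set.BijOn (Fmap k) S T := by
    refine ⟨?_, ?_, ?_⟩
    · -- MapsTo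
      intro t ht
      obtain ⟨hw, hg, hα, hβ⟩ := leftS t ht
      obtain ⟨⟨hsq, hchain, hd1, hαb, hβb, hml, hγ, hwt⟩, hd1k, hd2, hα1, hα2, hβ1⟩ := ht
      set d := dIdx k t.2.2.2 1 with hd
      have hFd : ∀ j, 1 ≤ j → j ≤ k - 1 →
          dIdx k (Fmap k t).2.2.2 j = if j = 1 then d + 1 else d := by
        intro j h1 h2
        exact dIdx_ifsq k (d + 1) d j h1 h2
      have hF1 : dIdx k (Fmap k t).2.2.2 1 = d + 1 := by
        rw [hFd 1 le_rfl (by omega)]; simp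
      have hFk : dIdx k (Fmap k t).2.2.2 (k - 1) = d := by
        rw [hFd (k - 1) (by omega) le_rfl, if_neg (by omega)]
      have hαlen : t.1.len = t.1.tail.len + 1 := by
        rw [Partn.len, hα]; simp [Partn.len]
      have hβlen : t.2.1.len = t.2.1.tail.len + 1 := by
        rw [Partn.len, hβ]; simp [Partn.len]
      have hαwt : t.1.wt = d + t.1.tail.wt := by
        rw [Partn.wt, hα]; simp [Partn.wt]
      have hβwt : t.2.1.wt = d + t.2.1.tail.wt := by
        rw [Partn.wt, hβ]; simp [Partn.wt]
      refine ⟨⟨?_, ?_, ?_, ?_, ?_, ?_, ?_, ?_⟩, ?_, ?_, ?_, ?_⟩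
      · intro i
        by_cases h : (i : ℕ) = 0 <;> simp [Fmap, h]
      · intro j h1 h2
        rw [hFd (j + 1) (by omega) h2, hFd j h1 (by omega), if_neg (by omega)]
        split <;> omega
      · rw [hFk]; omega
      · intro x hx
        rw [hFk]
        have : x ∈ t.1.parts := List.mem_of_mem_tail hx
        have := hαb x this
        omega
      · intro x hx
        rw [hFk]
        have : x ∈ t.2.1.parts := List.mem_of_mem_tail hx
        have := hβb x this
        omega
      · show ((t.1.tail.len : ℤ)) - (t.2.1.tail.len : ℤ) = m
        omega
      · intro j h1 h2
        have : gIdx k (Fmap k t).2.2.1 j = Partn.empty := by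
          show gIdx k t.2.2.1 j = Partn.empty
          rw [gIdx, dif_pos (by omega : j - 1 < k - 2)]
          exact hg _
        rw [this]
        simp
      · -- weight
        show t.1.tail.wt + t.2.1.tail.wt + (∑ i, (t.2.2.1 i).wt)
            + (∑ i : Fin (k - 1), ((Fmap k t).2.2.2 i).wt) = n + 1
        have hγ0 : (∑ i, (t.2.2.1 i).wt) = 0 := by simp [hg]
        have hFsum : (∑ i : Fin (k - 1), ((Fmap k t).2.2.2 i).wt)
            = (d + 1) * (d + 1) + (k - 2) * (d * d) := by
          have := sum_ifsq k hk (d + 1) d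
          simpa [Fmap] using this
        have hosum : (∑ i, (t.2.2.2 i).wt) = (k - 1) * (d * d) := by
          rw [hw]
          simp [Finset.sum_const, Finset.card_univ, smul_eq_mul]
        rw [hγ0, hFsum]
        rw [hγ0, hosum, hαwt, hβwt] at hwt
        obtain ⟨K, rfl⟩ : ∃ K, k = K + 3 := ⟨k - 3, by omega⟩
        have e1 : (K + 3 - 1) * (d * d) = (K + 3 - 2) * (d * d) + d * d := by
          have : K + 3 - 1 = (K + 3 - 2) + 1 := by omega
          rw [this]; ring
        have e2 : (d + 1) * (d + 1) = d * d + 2 * d + 1 := by ring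
        rw [e1] at hwt
        rw [e2]
        generalize (K + 3 - 2) * (d * d) = E at hwt ⊢
        generalize d * d = e at hwt ⊢
        omega
      · rw [hF1]; omega
      · intro j h1 h2
        rw [hFd j (by omega) h2, hF1, if_neg (by omega)]
        omega
      · intro j h1 h2
        show (gIdx k t.2.2.1 j).parts = []
        rw [gIdx, dif_pos (by omega : j - 1 < k - 2), hg]
        rfl
      · show t.1.tail.part 1 = dIdx k (Fmap k t).2.2.2 1 - 1
        rw [hF1]
        have : t.1.tail.part 1 = t.1.part 2 := by
          rw [Partn.part, Partn.part, Partn.tail_parts, hα]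
          simp
        rw [this, hα2]
        omega
    · -- InjOn
      intro t ht u hu heq
      obtain ⟨hwt', hgt, hαt, hβt⟩ := leftS t ht
      obtain ⟨hwu', hgu, hαu, hβu⟩ := leftS u hu
      have e1 := congrArg (fun x => x.1) heq
      have e2 := congrArg (fun x => x.2.1) heq
      have e3 := congrArg (fun x => x.2.2.1) heq
      have e4 := congrArg (fun x => x.2.2.2) heq
      simp only [Fmap] at e1 e2 e3 e4
      have hdd : dIdx k t.2.2.2 1 = dIdx k u.2.2.2 1 := by
        have := congrFun e4 ⟨0, h0⟩
        simp only [if_pos rfl] at this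
        have := congrArg Partn.len this
        simpa using this
      have hα : t.1 = u.1 := by
        apply Partn.ext'
        rw [hαt, hαu, ← hdd]
        rw [show t.1.tail = u.1.tail from e1]
      have hβ : t.2.1 = u.2.1 := by
        apply Partn.ext'
        rw [hβt, hβu, ← hdd]
        rw [show t.2.1.tail = u.2.1.tail from e2]
      have hww : t.2.2.2 = u.2.2.2 := by
        rw [hwt', hwu', hdd]
      exact Prod.ext hα (Prod.ext hβ (Prod.ext e3 hww))
    · -- SurjOn
      intro t' ht'
      obtain ⟨hw', hg', hαb', hβb'⟩ := rightT t' ht'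
      obtain ⟨⟨hsq, hchain, hd1, hαb, hβb, hml, hγ, hwt⟩, hd3, hdall, hgnil, hα1⟩ := ht'
      set d' := dIdx k t'.2.2.2 1 with hd'
      set e := d' - 1 with he
      have he2 : 2 ≤ e := by omega
      have hde : d' = e + 1 := by omega
      have hαsort : (e :: t'.1.parts).Pairwise (· ≥ ·) := by
        rw [List.pairwise_cons]
        exact ⟨fun b hb => hαb' b hb, t'.1.sorted⟩
      have hβsort : (e :: t'.2.1.parts).Pairwise (· ≥ ·) := by
        rw [List.pairwise_cons]
        exact ⟨fun b hb => hβb' b hb, t'.2.1.sorted⟩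
      have hαpos : ∀ x ∈ e :: t'.1.parts, 0 < x := by
        intro x hx
        rcases List.mem_cons.mp hx with h | h
        · omega
        · exact t'.1.pos x h
      have hβpos : ∀ x ∈ e :: t'.2.1.parts, 0 < x := by
        intro x hx
        rcases List.mem_cons.mp hx with h | h
        · omega
        · exact t'.2.1.pos x h
      set t0 : PTuple k := (⟨e :: t'.1.parts, hαsort, hαpos⟩,
        ⟨e :: t'.2.1.parts, hβsort, hβpos⟩, t'.2.2.1, fun _ => sqp e) with ht0
      have hc : ∀ j, 1 ≤ j → j ≤ k - 1 → dIdx k t0.2.2.2 j = e := by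
        intro j h1 h2
        exact dIdx_const k e j h1 h2
      have hc1 : dIdx k t0.2.2.2 1 = e := hc 1 le_rfl (by omega)
      have hck : dIdx k t0.2.2.2 (k - 1) = e := hc (k - 1) (by omega) le_rfl
      have hl1 : t0.1.len = t'.1.len + 1 := rfl
      have hl2 : t0.2.1.len = t'.2.1.len + 1 := rfl
      have hw1 : t0.1.wt = e + t'.1.wt := rfl
      have hw2 : t0.2.1.wt = e + t'.2.1.wt := rfl
      have hmem : t0 ∈ S := by
        refine ⟨⟨?_, ?_, ?_, ?_, ?_, ?_, ?_, ?_⟩, ?_, ?_, ?_, ?_, ?_⟩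
        · intro i
          show (sqp e).parts = List.replicate (sqp e).len (sqp e).len
          simp
        · intro j h1 h2
          rw [hc (j + 1) (by omega) h2, hc j h1 (by omega)]
        · rw [hck]; omega
        · intro x hx
          rw [hck]
          rcases List.mem_cons.mp hx with h | h
          · omega
          · exact hαb' x h
        · intro x hx
          rw [hck]
          rcases List.mem_cons.mp hx with h | h
          · omega
          · exact hβb' x h
        · rw [hl1, hl2]
          omega
        · intro j h1 h2
          have hz : (gIdx k t0.2.2.1 j).len = 0 := by
            show (gIdx k t'.2.2.1 j).len = 0
            rw [gIdx, dif_pos (by omega : j - 1 < k - 2), hg']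
            rfl
          omega
        · -- weight
          show t0.1.wt + t0.2.1.wt + (∑ i, (t'.2.2.1 i).wt)
              + (∑ _i : Fin (k - 1), (sqp e).wt) = n
          have hγ0 : (∑ i, (t'.2.2.1 i).wt) = 0 := by simp [hg']
          have hsum0 : (∑ _i : Fin (k - 1), (sqp e).wt) = (k - 1) * (e * e) := by
            simp [Finset.sum_const, Finset.card_univ, smul_eq_mul]
          have hsum' : (∑ i, (t'.2.2.2 i).wt) = d' * d' + (k - 2) * (e * e) := by
            rw [hw']
            exact sum_ifsq k hk d' e
          rw [hγ0, hsum0, hw1, hw2]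
          rw [hγ0, hsum'] at hwt
          obtain ⟨K, rfl⟩ : ∃ K, k = K + 3 := ⟨k - 3, by omega⟩
          rw [hde] at hwt
          have e1 : (K + 3 - 1) * (e * e) = (K + 3 - 2) * (e * e) + e * e := by
            have h' : K + 3 - 1 = (K + 3 - 2) + 1 := by omega
            rw [h']; ring
          have e2 : (e + 1) * (e + 1) = e * e + 2 * e + 1 := by ring
          rw [e2] at hwt
          rw [e1]
          generalize (K + 3 - 2) * (e * e) = E at hwt ⊢
          generalize e * e = x at hwt ⊢
          omega
        · rw [hc1, hck]
        · rw [hc1]; omega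
        · rw [hc1]
          show (e :: t'.1.parts).getD 0 0 = e
          rfl
        · rw [hc1]
          show (e :: t'.1.parts).getD 1 0 = e
          have : (e :: t'.1.parts).getD 1 0 = t'.1.parts.getD 0 0 := by
            simp
          rw [this]
          exact hα1
        · rw [hc1]
          show (e :: t'.2.1.parts).getD 0 0 = e
          rfl
      refine ⟨t0, hmem, ?_⟩
      -- Fmap k t0 = t'
      have hFw : (Fmap k t0).2.2.2 = t'.2.2.2 := by
        rw [hw']
        show (fun i : Fin (k - 1) =>
            if (i : ℕ) = 0 then sqp (dIdx k t0.2.2.2 1 + 1) else sqp (dIdx k t0.2.2.2 1))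
          = (fun i : Fin (k - 1) => if (i : ℕ) = 0 then sqp d' else sqp e)
        rw [hc1, hde]
      refine Prod.ext ?_ (Prod.ext ?_ (Prod.ext rfl hFw))
      · exact Partn.ext' rfl
      · exact Partn.ext' rfl
  calc S.ncard = (Fmap k '' S).ncard := (Set.ncard_image_of_injOn hbij.injOn).symm
    _ = T.ncard := by rw [hbij.image_eq]
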